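/- Let T = T₀ ⊕ T₁ be a superalgebra over a field of characteristic 0 and let G(T) = G₀⊗T₀ ⊕ G₁⊗T₁ be its Grassmann envelope. Then G(T) is an anti-commutative algebra satisfying the Tortkara identity (ab)(cd) + (ad)(cb) = J(a,b,c)d + J(a,d,c)b (with J(x,y,z) = (xy)z + (yz)x + (zx)y) if and only if T satisfies super anti-commutativity ab = −(−1)^{|a||b|}ba and the super Tortkara identity (ab)(cd) − (−1)^{|d|(|b|+|c|)}(ad)(bc) = J_s(a,b,c)d + (−1)^{|a||b|}b J_s(a,c,d) for homogeneous a, b, c, d, where J_s(x,y,z) = (xy)z − x(yz) − (−1)^{|y||z|}(xz)y. -/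

import Mathlib

open TensorProduct

noncomputable section

set_option maxHeartbeats 1000000
set_option synthInstance.maxHeartbeats 400000

/-- The Grassmann algebra on countably many generators, realized as the exterior
algebra (Clifford algebra of the zero quadratic form) on a countably-infinite
dimensional space, with its `ZMod 2`-grading `CliffordAlgebra.evenOdd 0`. -/
abbrev Grass (K : Type*) [Field K] := CliffordAlgebra (0 : QuadraticForm K (ℕ →₀ K))

/-- The bilinear product on `G ⊗ T` given by `(g⊗t)(g'⊗t') = gg' ⊗ tt'`. -/
def envMul {K T : Type*} [Field K] [AddCommGroup T] [Module K T]
    (mul : T →ₗ[K] T →ₗ[K] T) :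
    (Grass K ⊗[K] T) →ₗ[K] (Grass K ⊗[K] T) →ₗ[K] (Grass K ⊗[K] T) :=
  TensorProduct.curry
    ((TensorProduct.map (LinearMap.mul' K (Grass K)) (TensorProduct.lift mul)) ∘ₗ
      (TensorProduct.tensorTensorTensorComm K (Grass K) T (Grass K) T).toLinearMap)

/-- The Grassmann envelope `G(T) = G₀⊗T₀ ⊕ G₁⊗T₁` as a submodule of `G ⊗ T`. -/
def grassEnv {K T : Type*} [Field K] [AddCommGroup T] [Module K T]
    (grade : ZMod 2 → Submodule K T) : Submodule K (Grass K ⊗[K] T) :=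
  LinearMap.range (TensorProduct.map
      (CliffordAlgebra.evenOdd (0 : QuadraticForm K (ℕ →₀ K)) 0).subtype
      (grade 0).subtype) ⊔
  LinearMap.range (TensorProduct.map
      (CliffordAlgebra.evenOdd (0 : QuadraticForm K (ℕ →₀ K)) 1).subtype
      (grade 1).subtype)

/-- The Jacobian of the envelope product. -/
def envJ {K T : Type*} [Field K] [AddCommGroup T] [Module K T]
    (mul : T →ₗ[K] T →ₗ[K] T) (a b c : Grass K ⊗[K] T) : Grass K ⊗[K] T :=
  envMul mul (envMul mul a b) c + envMul mul (envMul mul b c) a +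
    envMul mul (envMul mul c a) b

namespace GTaux

/-! ### Sign bookkeeping -/

def sg (K : Type*) [Field K] (i j : ZMod 2) : K := (-1 : K) ^ (i.val * j.val)

lemma zmod2_cases (i : ZMod 2) : i = 0 ∨ i = 1 := by fin_cases i; exacts [Or.inl rfl, Or.inr rfl]

variable {K : Type*} [Field K]

lemma sg_add_right (i j k : ZMod 2) : sg K i (j + k) = sg K i j * sg K i k := by
  rcases zmod2_cases i with rfl | rfl <;> rcases zmod2_cases j with rfl | rfl <;>
    rcases zmod2_cases k with rfl | rfl <;>
    norm_num [sg, ZMod.val_one, ZMod.val_zero, show ((1:ZMod 2) + 1) = 0 from rfl,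
      show ZMod.val (2:ZMod 2) = 0 from rfl]

lemma sg_add_left (i j k : ZMod 2) : sg K (i + j) k = sg K i k * sg K j k := by
  rcases zmod2_cases i with rfl | rfl <;> rcases zmod2_cases j with rfl | rfl <;>
    rcases zmod2_cases k with rfl | rfl <;>
    norm_num [sg, ZMod.val_one, ZMod.val_zero, show ((1:ZMod 2) + 1) = 0 from rfl,
      show ZMod.val (2:ZMod 2) = 0 from rfl]

lemma sg_comm (i j : ZMod 2) : sg K i j = sg K j i := by rw [sg, sg, Nat.mul_comm]

/-! ### Supercommutativity of the Grassmann algebra -/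

local notation "𝒢" => CliffordAlgebra.evenOdd (0 : QuadraticForm K (ℕ →₀ K))
local notation "gi" => CliffordAlgebra.ι (0 : QuadraticForm K (ℕ →₀ K))

lemma ι_swap (v w : ℕ →₀ K) : gi v * gi w = -(gi w * gi v) :=
  eq_neg_of_add_eq_zero_left (ExteriorAlgebra.ι_add_mul_swap v w)

private lemma step_lemma {jv : ℕ} {s : K} {y x : Grass K} {m₁ m₂ : ℕ →₀ K}
    (h1 : gi m₁ * y = ((-1:K)^jv) • (y * gi m₁))
    (h2 : gi m₂ * y = ((-1:K)^jv) • (y * gi m₂))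
    (ih : x * y = s • (y * x)) :
    (gi m₁ * gi m₂ * x) * y = s • (y * (gi m₁ * gi m₂ * x)) := by
  calc (gi m₁ * gi m₂ * x) * y
      = gi m₁ * (gi m₂ * (x * y)) := by noncomm_ring
    _ = gi m₁ * (gi m₂ * (s • (y * x))) := by rw [ih]
    _ = s • (gi m₁ * (gi m₂ * y * x)) := by rw [mul_smul_comm, mul_smul_comm, mul_assoc (gi m₂)]
    _ = s • (gi m₁ * (((-1:K)^jv) • (y * gi m₂) * x)) := by rw [h2]
    _ = (s * ((-1:K)^jv)) • (gi m₁ * y * (gi m₂ * x)) := by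
        rw [smul_mul_assoc, mul_smul_comm, smul_smul, mul_assoc y, ← mul_assoc (gi m₁)]
    _ = (s * ((-1:K)^jv)) • ((((-1:K)^jv) • (y * gi m₁)) * (gi m₂ * x)) := by rw [h1]
    _ = (s * (((-1:K)^jv) * ((-1:K)^jv))) • (y * (gi m₁ * (gi m₂ * x))) := by
        rw [smul_mul_assoc, smul_smul, mul_assoc, mul_assoc]
    _ = s • (y * (gi m₁ * gi m₂ * x)) := by
        rw [← pow_add, Even.neg_one_pow ⟨jv, rfl⟩, mul_one, ← mul_assoc (gi m₁)]

lemma iota_comm (j : ZMod 2) (y : Grass K) (hy : y ∈ 𝒢 j) (v : ℕ →₀ K) :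
    gi v * y = ((-1 : K) ^ j.val) • (y * gi v) := by
  have key : ∀ (m₁ m₂ : ℕ →₀ K) (x : Grass K),
      gi v * x = ((-1 : K) ^ j.val) • (x * gi v) →
      gi v * (gi m₁ * gi m₂ * x) = ((-1 : K) ^ j.val) • (gi m₁ * gi m₂ * x * gi v) := by
    intro m₁ m₂ x ih
    calc gi v * (gi m₁ * gi m₂ * x)
        = (gi v * gi m₁) * (gi m₂ * x) := by noncomm_ring
      _ = -(gi m₁ * ((gi v * gi m₂) * x)) := by rw [ι_swap v m₁]; noncomm_ring
      _ = -(gi m₁ * (-(gi m₂ * gi v) * x)) := by rw [ι_swap v m₂]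
      _ = gi m₁ * (gi m₂ * (gi v * x)) := by noncomm_ring
      _ = ((-1 : K) ^ j.val) • (gi m₁ * (gi m₂ * (x * gi v))) := by
          rw [ih, mul_smul_comm, mul_smul_comm]
      _ = ((-1 : K) ^ j.val) • (gi m₁ * gi m₂ * x * gi v) := by
          rw [mul_assoc (gi m₁ * gi m₂), mul_assoc (gi m₁)]
  rcases zmod2_cases j with rfl | rfl
  · induction y, hy using CliffordAlgebra.even_induction with
    | algebraMap r => simp [Algebra.commutes]
    | add x y hx hy ihx ihy => simp only [mul_add, add_mul, ihx, ihy, smul_add]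
    | ι_mul_ι_mul m₁ m₂ x hx ih => exact key m₁ m₂ x ih
  · induction y, hy using CliffordAlgebra.odd_induction with
    | ι w => rw [ι_swap]; simp [ZMod.val_one]
    | add x y hx hy ihx ihy => simp only [mul_add, add_mul, ihx, ihy, smul_add]
    | ι_mul_ι_mul m₁ m₂ x hx ih => exact key m₁ m₂ x ih

lemma gcomm' {i j : ZMod 2} {x y : Grass K} (hx : x ∈ 𝒢 i) (hy : y ∈ 𝒢 j) :
    x * y = sg K i j • (y * x) := by
  rcases zmod2_cases i with rfl | rfl
  · simp only [sg, ZMod.val_zero, zero_mul, pow_zero, one_smul]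
    induction x, hx using CliffordAlgebra.even_induction with
    | algebraMap r => simp [Algebra.commutes]
    | add x x' hx hx' ihx ihx' => simp only [mul_add, add_mul, ihx, ihx']
    | ι_mul_ι_mul m₁ m₂ x hx ih =>
      have ih' : x * y = (1:K) • (y * x) := by rw [one_smul]; exact ih
      have h := step_lemma (iota_comm j y hy m₁) (iota_comm j y hy m₂) ih'
      rw [one_smul] at h; exact h
  · simp only [sg, ZMod.val_one, one_mul]
    induction x, hx using CliffordAlgebra.odd_induction with
    | ι v => exact iota_comm j y hy v
    | add x x' hx hx' ihx ihx' => simp only [mul_add, add_mul, ihx, ihx', smul_add]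
    | ι_mul_ι_mul m₁ m₂ x hx ih =>
      exact step_lemma (iota_comm j y hy m₁) (iota_comm j y hy m₂) ih

/-! ### Nonvanishing of products of distinct generators -/

def ee (K : Type*) [Field K] (n : ℕ) : ℕ →₀ K := Finsupp.single n 1

lemma prod_ne_zero {m : ℕ} (ns : Fin m → ℕ) (hns : Function.Injective ns) :
    (List.ofFn fun i => gi (ee K (ns i))).prod ≠ 0 := by
  classical
  set F : (ℕ →₀ K) [⋀^Fin m]→ₗ[K] K :=
    (Matrix.detRowAlternating : (Fin m → K) [⋀^Fin m]→ₗ[K] K).compLinearMap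
      (LinearMap.pi fun i => Finsupp.lapply (ns i)) with hF
  set f : ∀ i : ℕ, (ℕ →₀ K) [⋀^Fin i]→ₗ[K] K := Function.update (fun _ => 0) m F with hf
  intro h0
  have h1 : ExteriorAlgebra.liftAlternating f
      ((ExteriorAlgebra.ιMulti K m) fun i => ee K (ns i)) = 1 := by
    rw [ExteriorAlgebra.liftAlternating_apply_ιMulti]
    have hfm : f m = F := by rw [hf]; simp
    rw [hfm, hF]
    have hmat : (Matrix.of fun i j => (ee K (ns i)) (ns j)) = (1 : Matrix (Fin m) (Fin m) K) := by
      ext i j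
      simp only [Matrix.of_apply, ee, Matrix.one_apply, Finsupp.single_apply]
      by_cases h : i = j
      · simp [h]
      · have : ns i ≠ ns j := fun hc => h (hns hc)
        simp [h, this]
    calc Matrix.detRowAlternating
          ((LinearMap.pi fun i => Finsupp.lapply (ns i)) ∘ fun i => ee K (ns i))
        = Matrix.det (Matrix.of fun i j => (ee K (ns i)) (ns j)) := rfl
      _ = 1 := by rw [hmat, Matrix.det_one]
  rw [ExteriorAlgebra.ιMulti_apply] at h1
  rw [h0] at h1
  simp at h1

def gg (K : Type*) [Field K] (p : ZMod 2) (n : ℕ) : Grass K :=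
  if p = 0 then 1 else CliffordAlgebra.ι (0 : QuadraticForm K (ℕ →₀ K)) (ee K n)

lemma gg0 (n : ℕ) : gg K 0 n = 1 := if_pos rfl
lemma gg1 (n : ℕ) : gg K 1 n = gi (ee K n) := if_neg one_ne_zero

lemma gg_mem (p : ZMod 2) (n : ℕ) : gg K p n ∈ 𝒢 p := by
  rcases zmod2_cases p with rfl | rfl
  · rw [gg0]; exact SetLike.one_mem_graded _
  · rw [gg1]; exact CliffordAlgebra.ι_mem_evenOdd_one _ (ee K n)

lemma pn1 (a : ℕ) : gi (ee K a) ≠ 0 := by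
  have := prod_ne_zero (K := K) (m := 1) ![a] (by intro x y _; omega)
  simpa using this
lemma pn2 (a b : ℕ) (h : a ≠ b) : gi (ee K a) * gi (ee K b) ≠ 0 := by
  have := prod_ne_zero (K := K) (m := 2) ![a, b] ?_
  · simpa [List.ofFn_succ] using this
  · intro x y hxy; fin_cases x <;> fin_cases y <;> simp_all
lemma pn3 (a b c : ℕ) (h1 : a ≠ b) (h2 : a ≠ c) (h3 : b ≠ c) :
    gi (ee K a) * gi (ee K b) * gi (ee K c) ≠ 0 := by
  have := prod_ne_zero (K := K) (m := 3) ![a, b, c] ?_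
  · simpa [List.ofFn_succ, mul_assoc] using this
  · intro x y hxy; fin_cases x <;> fin_cases y <;> simp_all
lemma pn4 : gi (ee K 0) * gi (ee K 1) * gi (ee K 2) * gi (ee K 3) ≠ 0 := by
  have := prod_ne_zero (K := K) (m := 4) ![0, 1, 2, 3] ?_
  · simpa [List.ofFn_succ, mul_assoc] using this
  · intro x y hxy; fin_cases x <;> fin_cases y <;> simp_all

lemma gg2_ne (i j : ZMod 2) : gg K i 0 * gg K j 1 ≠ 0 := by
  rcases zmod2_cases i with rfl | rfl <;> rcases zmod2_cases j with rfl | rfl <;>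
    simp only [gg0, gg1, one_mul, mul_one] <;>
    first
      | exact one_ne_zero
      | exact pn1 _
      | exact pn2 0 1 (by omega)

lemma gg4_ne (i j k l : ZMod 2) : gg K i 0 * gg K j 1 * gg K k 2 * gg K l 3 ≠ 0 := by
  rcases zmod2_cases i with rfl | rfl <;> rcases zmod2_cases j with rfl | rfl <;>
    rcases zmod2_cases k with rfl | rfl <;> rcases zmod2_cases l with rfl | rfl <;>
    simp only [gg0, gg1, one_mul, mul_one] <;>
    first
      | exact one_ne_zero
      | exact pn1 _
      | exact pn2 _ _ (by omega)
      | exact pn3 _ _ _ (by omega) (by omega) (by omega)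
      | exact pn4

/-! ### Cancelling a nonzero tensor factor -/

lemma tmul_left_cancel {T : Type*} [AddCommGroup T] [Module K T]
    {g : Grass K} (hg : g ≠ 0) {x : T} (h : g ⊗ₜ[K] x = 0) : x = 0 := by
  have hinj : Function.Injective (LinearMap.toSpanSingleton K (Grass K) g) := by
    intro c c' hcc
    simp only [LinearMap.toSpanSingleton_apply] at hcc
    by_contra hne
    have hz : (c - c') • g = 0 := by rw [sub_smul, hcc, sub_self]
    rcases smul_eq_zero.mp hz with h' | h'
    · exact hne (sub_eq_zero.mp h')
    · exact hg h'
  have h2 : Function.Injective ((LinearMap.toSpanSingleton K (Grass K) g).rTensor T) :=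
    Module.Flat.rTensor_preserves_injective_linearMap _ hinj
  have h3 : (LinearMap.toSpanSingleton K (Grass K) g).rTensor T ((1 : K) ⊗ₜ[K] x)
      = g ⊗ₜ[K] x := by simp [LinearMap.rTensor_tmul]
  have h4 : (1 : K) ⊗ₜ[K] x = 0 := h2 (by rw [h3, h, map_zero])
  have := congrArg (TensorProduct.lid K T) h4
  simpa using this

/-! ### Generic permutation lemmas for supercommuting elements -/

section perms
variable {A : Type*} [Ring A] [Algebra K A] {s1 s2 s3 : K} {x y z w : A}

lemma assoc4a (x y z w : A) : x*((y*z)*w) = x*y*z*w := by rw [← mul_assoc, ← mul_assoc]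
lemma assoc4b (x y z w : A) : x*(y*(z*w)) = x*y*z*w := by rw [← mul_assoc y, ← mul_assoc, ← mul_assoc]

lemma permT2 (hzy : z*y = s1 • (y*z)) (hw : w*(y*z) = s2 • ((y*z)*w)) :
    (x*w)*(z*y) = (s1*s2) • (x*y*z*w) := by
  calc (x*w)*(z*y) = (x*w)*(s1 • (y*z)) := by rw [hzy]
    _ = s1 • (x*(w*(y*z))) := by rw [mul_smul_comm, mul_assoc]
    _ = s1 • (x*(s2 • ((y*z)*w))) := by rw [hw]
    _ = (s1*s2) • (x*y*z*w) := by rw [mul_smul_comm, smul_smul, assoc4a]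

lemma permT4 (hyz_x : (y*z)*x = s1 • (x*(y*z))) :
    ((y*z)*x)*w = s1 • (x*y*z*w) := by
  rw [hyz_x, smul_mul_assoc, mul_assoc x, assoc4a]

lemma permT5 (hzx : z*x = s1 • (x*z)) (hzy : z*y = s2 • (y*z)) :
    ((z*x)*y)*w = (s1*s2) • (x*y*z*w) := by
  calc ((z*x)*y)*w = ((s1 • (x*z))*y)*w := by rw [hzx]
    _ = s1 • ((x*(z*y))*w) := by rw [smul_mul_assoc, smul_mul_assoc, mul_assoc x]
    _ = s1 • ((x*(s2 • (y*z)))*w) := by rw [hzy]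
    _ = (s1*s2) • (x*y*z*w) := by
        rw [mul_smul_comm, smul_mul_assoc, smul_smul, mul_assoc x, assoc4a]

lemma permT6 (hwz : w*z = s1 • (z*w)) (hzw_y : (z*w)*y = s2 • (y*(z*w))) :
    ((x*w)*z)*y = (s1*s2) • (x*y*z*w) := by
  calc ((x*w)*z)*y = (x*(s1 • (z*w)))*y := by rw [mul_assoc x, hwz]
    _ = s1 • (x*((z*w)*y)) := by rw [mul_smul_comm, smul_mul_assoc, mul_assoc x]
    _ = s1 • (x*(s2 • (y*(z*w)))) := by rw [hzw_y]
    _ = (s1*s2) • (x*y*z*w) := by rw [mul_smul_comm, smul_smul, assoc4b]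

lemma permT7 (hwz : w*z = s1 • (z*w)) (hzw_x : (z*w)*x = s2 • (x*(z*w)))
    (hzw_y : (z*w)*y = s3 • (y*(z*w))) :
    ((w*z)*x)*y = (s1*(s2*s3)) • (x*y*z*w) := by
  calc ((w*z)*x)*y = ((s1 • (z*w))*x)*y := by rw [hwz]
    _ = s1 • (((z*w)*x)*y) := by rw [smul_mul_assoc, smul_mul_assoc]
    _ = s1 • ((s2 • (x*(z*w)))*y) := by rw [hzw_x]
    _ = (s1*s2) • (x*((z*w)*y)) := by rw [smul_mul_assoc, smul_smul, mul_assoc x]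
    _ = (s1*s2) • (x*(s3 • (y*(z*w)))) := by rw [hzw_y]
    _ = (s1*(s2*s3)) • (x*y*z*w) := by rw [mul_smul_comm, smul_smul, assoc4b, mul_assoc s1]

lemma permT8 (hzx : z*x = s1 • (x*z)) (hzw_y : (z*w)*y = s2 • (y*(z*w))) :
    ((z*x)*w)*y = (s1*s2) • (x*y*z*w) := by
  calc ((z*x)*w)*y = ((s1 • (x*z))*w)*y := by rw [hzx]
    _ = s1 • ((x*(z*w))*y) := by rw [smul_mul_assoc, smul_mul_assoc, mul_assoc x]
    _ = s1 • (x*((z*w)*y)) := by rw [mul_assoc x]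
    _ = s1 • (x*(s2 • (y*(z*w)))) := by rw [hzw_y]
    _ = (s1*s2) • (x*y*z*w) := by rw [mul_smul_comm, smul_smul, assoc4b]

end perms

/-! ### Generic master computations on the envelope -/

section genmaster
variable {A T : Type*} [Ring A] [Algebra K A] [AddCommGroup T] [Module K T]
  (mul : T →ₗ[K] T →ₗ[K] T)
  (E : (A ⊗[K] T) →ₗ[K] (A ⊗[K] T) →ₗ[K] (A ⊗[K] T))
  (hE : ∀ (g g' : A) (t t' : T), E (g ⊗ₜ t) (g' ⊗ₜ t') = (g * g') ⊗ₜ (mul t t'))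

include hE

lemma gen_master_anti {s : K} {x y : A} (hyx : y*x = s • (x*y)) (ta tb : T) :
    E (x ⊗ₜ ta) (y ⊗ₜ tb) + E (y ⊗ₜ tb) (x ⊗ₜ ta)
      = (x * y) ⊗ₜ[K] (mul ta tb + s • mul tb ta) := by
  rw [hE, hE, hyx, ← TensorProduct.smul_tmul', TensorProduct.tmul_add, tmul_smul]

lemma gen_master_tort {s1 s2 s3 s4 s5 s6 s7 : K} {x y z w : A}
    (hzy : z*y = s1 • (y*z)) (hw_yz : w*(y*z) = s2 • ((y*z)*w))
    (hyz_x : (y*z)*x = s3 • (x*(y*z))) (hzx : z*x = s4 • (x*z))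
    (hwz : w*z = s5 • (z*w)) (hzw_y : (z*w)*y = s6 • (y*(z*w)))
    (hzw_x : (z*w)*x = s7 • (x*(z*w)))
    (ta tb tc td : T) :
    E (E (x ⊗ₜ ta) (y ⊗ₜ tb)) (E (z ⊗ₜ tc) (w ⊗ₜ td))
    + E (E (x ⊗ₜ ta) (w ⊗ₜ td)) (E (z ⊗ₜ tc) (y ⊗ₜ tb))
    - (E (E (E (x ⊗ₜ ta) (y ⊗ₜ tb)) (z ⊗ₜ tc)
         + E (E (y ⊗ₜ tb) (z ⊗ₜ tc)) (x ⊗ₜ ta)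
         + E (E (z ⊗ₜ tc) (x ⊗ₜ ta)) (y ⊗ₜ tb)) (w ⊗ₜ td)
       + E (E (E (x ⊗ₜ ta) (w ⊗ₜ td)) (z ⊗ₜ tc)
         + E (E (w ⊗ₜ td) (z ⊗ₜ tc)) (x ⊗ₜ ta)
         + E (E (z ⊗ₜ tc) (x ⊗ₜ ta)) (w ⊗ₜ td)) (y ⊗ₜ tb))
    = (x*y*z*w) ⊗ₜ[K]
      (mul (mul ta tb) (mul tc td)
        + (s1*s2) • mul (mul ta td) (mul tc tb)
        - (mul (mul (mul ta tb) tc) td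
          + s3 • mul (mul (mul tb tc) ta) td
          + (s4*s1) • mul (mul (mul tc ta) tb) td
          + (s5*s6) • mul (mul (mul ta td) tc) tb
          + (s5*(s7*s6)) • mul (mul (mul td tc) ta) tb
          + (s4*s6) • mul (mul (mul tc ta) td) tb)) := by
  simp only [hE, map_add, LinearMap.add_apply]
  rw [show (x*y)*(z*w) = x*y*z*w from by rw [mul_assoc (x*y)],
    permT2 hzy hw_yz, permT4 hyz_x, permT5 hzx hzy,
    permT6 hwz hzw_y, permT7 hwz hzw_x hzw_y, permT8 hzx hzw_y]
  simp only [← TensorProduct.smul_tmul', TensorProduct.tmul_add, TensorProduct.tmul_sub,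
    tmul_smul]
  module

end genmaster

/-! ### The purely super-algebraic computation -/

section tlemma
variable {T : Type*} [AddCommGroup T] [Module K T]
  (grade : ZMod 2 → Submodule K T) (mul : T →ₗ[K] T →ₗ[K] T)
  (hgr : ∀ i j : ZMod 2, ∀ a ∈ grade i, ∀ b ∈ grade j, mul a b ∈ grade (i + j))
  (anti : ∀ i j : ZMod 2, ∀ a ∈ grade i, ∀ b ∈ grade j, mul a b = -(sg K i j • mul b a))

include hgr anti in
lemma T_lemma (i j k l : ZMod 2) (ta : T) (hta : ta ∈ grade i) (tb : T) (htb : tb ∈ grade j)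
    (tc : T) (htc : tc ∈ grade k) (td : T) (htd : td ∈ grade l) :
    mul (mul ta tb) (mul tc td)
      + (sg K k j * (sg K l j * sg K l k)) • mul (mul ta td) (mul tc tb)
      - (mul (mul (mul ta tb) tc) td
        + (sg K j i * sg K k i) • mul (mul (mul tb tc) ta) td
        + (sg K k i * sg K k j) • mul (mul (mul tc ta) tb) td
        + (sg K l k * (sg K k j * sg K l j)) • mul (mul (mul ta td) tc) tb
        + (sg K l k * ((sg K k i * sg K l i) * (sg K k j * sg K l j))) • mul (mul (mul td tc) ta) tb
        + (sg K k i * (sg K k j * sg K l j)) • mul (mul (mul tc ta) td) tb)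
    = (mul (mul ta tb) (mul tc td) - (sg K l j * sg K l k) • mul (mul ta td) (mul tb tc))
      - (mul (mul (mul ta tb) tc - mul ta (mul tb tc) - sg K j k • mul (mul ta tc) tb) td
        + sg K i j • mul tb (mul (mul ta tc) td - mul ta (mul tc td)
            - sg K k l • mul (mul ta td) tc)) := by
  have hcb : mul tc tb = -(sg K k j • mul tb tc) := anti k j tc htc tb htb
  have hca : mul tc ta = -(sg K k i • mul ta tc) := anti k i tc htc ta hta
  have hdc : mul td tc = -(sg K l k • mul tc td) := anti l k td htd tc htc
  have hbc_a : mul (mul tb tc) ta = -((sg K j i * sg K k i) • mul ta (mul tb tc)) := by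
    have := anti (j+k) i _ (hgr j k tb htb tc htc) ta hta
    rwa [sg_add_left] at this
  have hcd_a : mul (mul tc td) ta = -((sg K k i * sg K l i) • mul ta (mul tc td)) := by
    have := anti (k+l) i _ (hgr k l tc htc td htd) ta hta
    rwa [sg_add_left] at this
  have hadc_b : mul (mul (mul ta td) tc) tb
      = -((sg K i j * sg K l j * sg K k j) • mul tb (mul (mul ta td) tc)) := by
    have := anti ((i+l)+k) j _ (hgr (i+l) k _ (hgr i l ta hta td htd) tc htc) tb htb
    rwa [sg_add_left, sg_add_left] at this
  have hacd_b : mul (mul ta (mul tc td)) tb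
      = -((sg K i j * sg K k j * sg K l j) • mul tb (mul ta (mul tc td))) := by
    have := anti (i+(k+l)) j _ (hgr i (k+l) ta hta _ (hgr k l tc htc td htd)) tb htb
    rwa [sg_add_left, sg_add_left, ← mul_assoc] at this
  have hac_d_b : mul (mul (mul ta tc) td) tb
      = -((sg K i j * sg K k j * sg K l j) • mul tb (mul (mul ta tc) td)) := by
    have := anti ((i+k)+l) j _ (hgr (i+k) l _ (hgr i k ta hta tc htc) td htd) tb htb
    rwa [sg_add_left, sg_add_left] at this
  rw [hcb, hbc_a, hca, hadc_b, hdc]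
  simp only [map_neg, map_smul, LinearMap.neg_apply, LinearMap.smul_apply, neg_neg, smul_neg,
    map_sub, LinearMap.sub_apply]
  rw [hcd_a, hac_d_b]
  simp only [map_neg, map_smul, LinearMap.neg_apply, LinearMap.smul_apply, neg_neg, smul_neg,
    map_sub, LinearMap.sub_apply]
  rw [hacd_b]
  simp only [map_neg, map_smul, LinearMap.neg_apply, LinearMap.smul_apply, neg_neg, smul_neg,
    smul_smul]
  match_scalars <;>
    (rcases zmod2_cases i with rfl | rfl <;> rcases zmod2_cases j with rfl | rfl <;>
     rcases zmod2_cases k with rfl | rfl <;> rcases zmod2_cases l with rfl | rfl <;>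
     norm_num [sg, ZMod.val_zero, ZMod.val_one])
end tlemma

/-! ### Multilinear extension over a spanning set -/

section ext
variable {M : Type*} [AddCommGroup M] [Module K M]

def Phi (E : M →ₗ[K] M →ₗ[K] M) (a b c d : M) : M :=
  E (E a b) (E c d) + E (E a d) (E c b)
    - (E (E (E a b) c + E (E b c) a + E (E c a) b) d
       + E (E (E a d) c + E (E d c) a + E (E c a) d) b)

variable (E : M →ₗ[K] M →ₗ[K] M)

lemma Phi_zero1 (b c d : M) : Phi E 0 b c d = 0 := by simp [Phi]
lemma Phi_zero2 (a c d : M) : Phi E a 0 c d = 0 := by simp [Phi]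
lemma Phi_zero3 (a b d : M) : Phi E a b 0 d = 0 := by simp [Phi]
lemma Phi_zero4 (a b c : M) : Phi E a b c 0 = 0 := by simp [Phi]

lemma Phi_add1 (x y b c d : M) : Phi E (x + y) b c d = Phi E x b c d + Phi E y b c d := by
  simp only [Phi, map_add, LinearMap.add_apply]; abel
lemma Phi_add2 (a x y c d : M) : Phi E a (x + y) c d = Phi E a x c d + Phi E a y c d := by
  simp only [Phi, map_add, LinearMap.add_apply]; abel
lemma Phi_add3 (a b x y d : M) : Phi E a b (x + y) d = Phi E a b x d + Phi E a b y d := by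
  simp only [Phi, map_add, LinearMap.add_apply]; abel
lemma Phi_add4 (a b c x y : M) : Phi E a b c (x + y) = Phi E a b c x + Phi E a b c y := by
  simp only [Phi, map_add, LinearMap.add_apply]; abel

lemma Phi_smul1 (r : K) (x b c d : M) : Phi E (r • x) b c d = r • Phi E x b c d := by
  simp only [Phi, map_smul, LinearMap.smul_apply, map_add, LinearMap.add_apply]; module
lemma Phi_smul2 (r : K) (a x c d : M) : Phi E a (r • x) c d = r • Phi E a x c d := by
  simp only [Phi, map_smul, LinearMap.smul_apply, map_add, LinearMap.add_apply]; module
lemma Phi_smul3 (r : K) (a b x d : M) : Phi E a b (r • x) d = r • Phi E a b x d := by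
  simp only [Phi, map_smul, LinearMap.smul_apply, map_add, LinearMap.add_apply]; module
lemma Phi_smul4 (r : K) (a b c x : M) : Phi E a b c (r • x) = r • Phi E a b c x := by
  simp only [Phi, map_smul, LinearMap.smul_apply, map_add, LinearMap.add_apply]; module

lemma ext_anti {S : Set M} (h : ∀ a ∈ S, ∀ b ∈ S, E a b + E b a = 0) :
    ∀ a ∈ Submodule.span K S, ∀ b ∈ Submodule.span K S, E a b + E b a = 0 := by
  intro a ha
  induction ha using Submodule.span_induction with
  | mem x hx =>
    intro b hb
    induction hb using Submodule.span_induction with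
    | mem y hy => exact h x hx y hy
    | zero => simp
    | add y z hy hz ihy ihz =>
      simp only [map_add, LinearMap.add_apply]
      rw [add_add_add_comm, ihy, ihz, add_zero]
    | smul r y hy ihy =>
      simp only [map_smul, LinearMap.smul_apply, ← smul_add, ihy, smul_zero]
  | zero => simp
  | add x y hx hy ihx ihy =>
    intro b hb
    simp only [map_add, LinearMap.add_apply]
    rw [add_add_add_comm, ihx b hb, ihy b hb, add_zero]
  | smul r x hx ihx =>
    intro b hb
    simp only [map_smul, LinearMap.smul_apply, ← smul_add, ihx b hb, smul_zero]

lemma ext_tort {S : Set M}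
    (h : ∀ a ∈ S, ∀ b ∈ S, ∀ c ∈ S, ∀ d ∈ S, Phi E a b c d = 0) :
    ∀ a ∈ Submodule.span K S, ∀ b ∈ Submodule.span K S, ∀ c ∈ Submodule.span K S,
      ∀ d ∈ Submodule.span K S, Phi E a b c d = 0 := by
  intro a ha
  induction ha using Submodule.span_induction with
  | zero => intro b _ c _ d _; exact Phi_zero1 E b c d
  | add x y hx hy ihx ihy =>
    intro b hb c hc d hd
    rw [Phi_add1, ihx b hb c hc d hd, ihy b hb c hc d hd, add_zero]
  | smul r x hx ihx =>
    intro b hb c hc d hd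
    rw [Phi_smul1, ihx b hb c hc d hd, smul_zero]
  | mem x hx =>
    intro b hb
    induction hb using Submodule.span_induction with
    | zero => intro c _ d _; exact Phi_zero2 E x c d
    | add u v hu hv ihu ihv =>
      intro c hc d hd
      rw [Phi_add2, ihu c hc d hd, ihv c hc d hd, add_zero]
    | smul r u hu ihu =>
      intro c hc d hd
      rw [Phi_smul2, ihu c hc d hd, smul_zero]
    | mem y hy =>
      intro c hc
      induction hc using Submodule.span_induction with
      | zero => intro d _; exact Phi_zero3 E x y d
      | add u v hu hv ihu ihv =>
        intro d hd
        rw [Phi_add3, ihu d hd, ihv d hd, add_zero]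
      | smul r u hu ihu =>
        intro d hd
        rw [Phi_smul3, ihu d hd, smul_zero]
      | mem z hz =>
        intro d hd
        induction hd using Submodule.span_induction with
        | zero => exact Phi_zero4 E x y z
        | add u v hu hv ihu ihv => rw [Phi_add4, ihu, ihv, add_zero]
        | smul r u hu ihu => rw [Phi_smul4, ihu, smul_zero]
        | mem w hw => exact h x hx y hy z hz w hw
end ext

/-! ### The envelope as a span of homogeneous tensors -/

section spanchar
variable {T : Type*} [AddCommGroup T] [Module K T] (grade : ZMod 2 → Submodule K T)

theorem envMul_tmul (mul : T →ₗ[K] T →ₗ[K] T) (g g' : Grass K) (t t' : T) :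
    envMul mul (g ⊗ₜ t) (g' ⊗ₜ t') = (g * g') ⊗ₜ[K] (mul t t') := by
  simp [envMul, TensorProduct.curry_apply, tensorTensorTensorComm_tmul]

def SB : Set (Grass K ⊗[K] T) :=
  {z | ∃ (p : ZMod 2) (g : Grass K) (t : T), g ∈ 𝒢 p ∧ t ∈ grade p ∧ z = g ⊗ₜ t}

lemma grassEnv_le_span : grassEnv grade ≤ Submodule.span K (SB grade) := by
  rw [grassEnv]
  apply sup_le <;>
    · rw [TensorProduct.range_map_eq_span_tmul]
      apply Submodule.span_le.mpr
      rintro _ ⟨⟨g, hg⟩, ⟨t, ht⟩, rfl⟩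
      exact Submodule.subset_span ⟨_, g, t, hg, ht, rfl⟩

lemma mem_grassEnv (p : ZMod 2) (g : Grass K) (hg : g ∈ 𝒢 p) (t : T) (ht : t ∈ grade p) :
    g ⊗ₜ[K] t ∈ grassEnv grade := by
  rcases zmod2_cases p with rfl | rfl
  · exact Submodule.mem_sup_left (LinearMap.mem_range.mpr
      ⟨(⟨g, hg⟩ : 𝒢 0) ⊗ₜ (⟨t, ht⟩ : grade 0), by simp [TensorProduct.map_tmul]⟩)
  · exact Submodule.mem_sup_right (LinearMap.mem_range.mpr
      ⟨(⟨g, hg⟩ : 𝒢 1) ⊗ₜ (⟨t, ht⟩ : grade 1), by simp [TensorProduct.map_tmul]⟩)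

end spanchar

/-! ### Grass-level master lemmas -/

section grassmaster
variable {T : Type*} [AddCommGroup T] [Module K T] (mul : T →ₗ[K] T →ₗ[K] T)

lemma grass_master_anti {p q : ZMod 2} {g g' : Grass K} (hg : g ∈ 𝒢 p) (hg' : g' ∈ 𝒢 q)
    (t t' : T) :
    envMul mul (g ⊗ₜ t) (g' ⊗ₜ t') + envMul mul (g' ⊗ₜ t') (g ⊗ₜ t)
      = (g * g') ⊗ₜ[K] (mul t t' + sg K p q • mul t' t) := by
  have h := gen_master_anti mul (envMul mul) (envMul_tmul mul) (gcomm' hg' hg) t t'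
  rwa [sg_comm q p] at h

lemma grass_master_tort {i j k l : ZMod 2} {ga gb gc gd : Grass K}
    (hga : ga ∈ 𝒢 i) (hgb : gb ∈ 𝒢 j) (hgc : gc ∈ 𝒢 k) (hgd : gd ∈ 𝒢 l)
    (ta tb tc td : T) :
    Phi (envMul mul) (ga ⊗ₜ ta) (gb ⊗ₜ tb) (gc ⊗ₜ tc) (gd ⊗ₜ td)
      = (ga*gb*gc*gd) ⊗ₜ[K]
        (mul (mul ta tb) (mul tc td)
          + (sg K k j * (sg K l j * sg K l k)) • mul (mul ta td) (mul tc tb)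
          - (mul (mul (mul ta tb) tc) td
            + (sg K j i * sg K k i) • mul (mul (mul tb tc) ta) td
            + (sg K k i * sg K k j) • mul (mul (mul tc ta) tb) td
            + (sg K l k * (sg K k j * sg K l j)) • mul (mul (mul ta td) tc) tb
            + (sg K l k * ((sg K k i * sg K l i) * (sg K k j * sg K l j))) •
                mul (mul (mul td tc) ta) tb
            + (sg K k i * (sg K k j * sg K l j)) • mul (mul (mul tc ta) td) tb)) := by
  have hbc := SetLike.mul_mem_graded hgb hgc
  have hcd := SetLike.mul_mem_graded hgc hgd
  have hzy : gc * gb = sg K k j • (gb * gc) := gcomm' hgc hgb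
  have hw_yz : gd * (gb * gc) = (sg K l j * sg K l k) • ((gb * gc) * gd) := by
    rw [gcomm' hgd hbc, sg_add_right]
  have hyz_x : (gb * gc) * ga = (sg K j i * sg K k i) • (ga * (gb * gc)) := by
    rw [gcomm' hbc hga, sg_add_left]
  have hzx : gc * ga = sg K k i • (ga * gc) := gcomm' hgc hga
  have hwz : gd * gc = sg K l k • (gc * gd) := gcomm' hgd hgc
  have hzw_y : (gc * gd) * gb = (sg K k j * sg K l j) • (gb * (gc * gd)) := by
    rw [gcomm' hcd hgb, sg_add_left]
  have hzw_x : (gc * gd) * ga = (sg K k i * sg K l i) • (ga * (gc * gd)) := by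
    rw [gcomm' hcd hga, sg_add_left]
  have hMT := gen_master_tort mul (envMul mul) (envMul_tmul mul)
    hzy hw_yz hyz_x hzx hwz hzw_y hzw_x ta tb tc td
  rw [Phi]
  exact hMT

end grassmaster

end GTaux

open GTaux in
/-- `G(T)` is an anti-commutative Tortkara algebra if and only if `T`
is super anti-commutative and satisfies the super Tortkara identity. -/
theorem grassEnv_tortkara_iff {K T : Type*} [Field K] [CharZero K]
    [AddCommGroup T] [Module K T]
    (grade : ZMod 2 → Submodule K T)
    (mul : T →ₗ[K] T →ₗ[K] T)
    (hgr : ∀ i j : ZMod 2, ∀ a ∈ grade i, ∀ b ∈ grade j, mul a b ∈ grade (i + j)) :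
    ((∀ a ∈ grassEnv (K := K) grade, ∀ b ∈ grassEnv (K := K) grade,
        envMul mul a b = -envMul mul b a) ∧
     (∀ a ∈ grassEnv (K := K) grade, ∀ b ∈ grassEnv (K := K) grade,
      ∀ c ∈ grassEnv (K := K) grade, ∀ d ∈ grassEnv (K := K) grade,
        envMul mul (envMul mul a b) (envMul mul c d) +
          envMul mul (envMul mul a d) (envMul mul c b) =
        envMul mul (envJ mul a b c) d + envMul mul (envJ mul a d c) b)) ↔
    ((∀ i j : ZMod 2, ∀ a ∈ grade i, ∀ b ∈ grade j,
        mul a b = -(((-1 : K) ^ (i.val * j.val)) • mul b a)) ∧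
     (∀ i j k l : ZMod 2, ∀ a ∈ grade i, ∀ b ∈ grade j, ∀ c ∈ grade k, ∀ d ∈ grade l,
        mul (mul a b) (mul c d) -
          ((-1 : K) ^ (l.val * ((j + k : ZMod 2)).val)) • mul (mul a d) (mul b c) =
        mul (mul (mul a b) c - mul a (mul b c) -
            ((-1 : K) ^ (j.val * k.val)) • mul (mul a c) b) d +
          ((-1 : K) ^ (i.val * j.val)) •
            mul b (mul (mul a c) d - mul a (mul c d) -
              ((-1 : K) ^ (k.val * l.val)) • mul (mul a d) c))) := by
  have hbridge : ∀ j k l : ZMod 2,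
      ((-1 : K) ^ (l.val * ((j + k : ZMod 2)).val)) = sg K l j * sg K l k := by
    intro j k l
    rw [← sg_add_right]
    rfl
  constructor
  · rintro ⟨hA, hT⟩
    have anti : ∀ i j : ZMod 2, ∀ a ∈ grade i, ∀ b ∈ grade j,
        mul a b = -(sg K i j • mul b a) := by
      intro i j ta hta tb htb
      have hga := gg_mem (K := K) i 0
      have hgb := gg_mem (K := K) j 1
      have ma := mem_grassEnv grade i _ hga ta hta
      have mb := mem_grassEnv grade j _ hgb tb htb
      have h0 := hA _ ma _ mb
      have h1 : envMul mul (gg K i 0 ⊗ₜ ta) (gg K j 1 ⊗ₜ tb)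
          + envMul mul (gg K j 1 ⊗ₜ tb) (gg K i 0 ⊗ₜ ta) = 0 := by
        rw [h0, neg_add_cancel]
      have h2 := grass_master_anti mul hga hgb ta tb
      rw [h1] at h2
      have h3 := tmul_left_cancel (gg2_ne i j) h2.symm
      exact eq_neg_of_add_eq_zero_left h3
    refine ⟨anti, ?_⟩
    intro i j k l ta hta tb htb tc htc td htd
    have hga := gg_mem (K := K) i 0
    have hgb := gg_mem (K := K) j 1
    have hgc := gg_mem (K := K) k 2
    have hgd := gg_mem (K := K) l 3
    have ma := mem_grassEnv grade i _ hga ta hta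
    have mb := mem_grassEnv grade j _ hgb tb htb
    have mc := mem_grassEnv grade k _ hgc tc htc
    have md := mem_grassEnv grade l _ hgd td htd
    have h0 := hT _ ma _ mb _ mc _ md
    simp only [envJ] at h0
    have hPhi : Phi (envMul mul) (gg K i 0 ⊗ₜ ta) (gg K j 1 ⊗ₜ tb) (gg K k 2 ⊗ₜ tc)
        (gg K l 3 ⊗ₜ td) = 0 := by
      rw [Phi]
      exact sub_eq_zero_of_eq h0
    have hMT := grass_master_tort mul hga hgb hgc hgd ta tb tc td
    rw [hPhi] at hMT
    have hX := tmul_left_cancel (gg4_ne i j k l) hMT.symm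
    rw [T_lemma grade mul hgr anti i j k l ta hta tb htb tc htc td htd] at hX
    have hfin := eq_of_sub_eq_zero hX
    rw [hbridge j k l]
    exact hfin
  · rintro ⟨anti0, tort0⟩
    have anti : ∀ i j : ZMod 2, ∀ a ∈ grade i, ∀ b ∈ grade j,
        mul a b = -(sg K i j • mul b a) := anti0
    have hS : ∀ z ∈ SB (K := K) grade, ∀ w ∈ SB (K := K) grade,
        envMul mul z w + envMul mul w z = 0 := by
      rintro _ ⟨p, g, t, hg, ht, rfl⟩ _ ⟨q, g', t', hg', ht', rfl⟩
      rw [grass_master_anti mul hg hg' t t', anti p q t ht t' ht', neg_add_cancel,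
        TensorProduct.tmul_zero]
    constructor
    · intro a ha b hb
      have key := ext_anti (envMul mul) hS a (grassEnv_le_span grade ha)
        b (grassEnv_le_span grade hb)
      exact eq_neg_of_add_eq_zero_left key
    · intro a ha b hb c hc d hd
      have hS4 : ∀ z ∈ SB (K := K) grade, ∀ w ∈ SB (K := K) grade,
          ∀ u ∈ SB (K := K) grade, ∀ v ∈ SB (K := K) grade,
          Phi (envMul mul) z w u v = 0 := by
        rintro _ ⟨i, ga, ta, hga, hta, rfl⟩ _ ⟨j, gb, tb, hgb, htb, rfl⟩
          _ ⟨k, gc, tc, hgc, htc, rfl⟩ _ ⟨l, gd, td, hgd, htd, rfl⟩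
        have hMT := grass_master_tort mul hga hgb hgc hgd ta tb tc td
        have htl := T_lemma grade mul hgr anti i j k l ta hta tb htb tc htc td htd
        have h0 := tort0 i j k l ta hta tb htb tc htc td htd
        rw [hbridge j k l] at h0
        have hX : (mul (mul ta tb) (mul tc td)
            + (sg K k j * (sg K l j * sg K l k)) • mul (mul ta td) (mul tc tb)
            - (mul (mul (mul ta tb) tc) td
              + (sg K j i * sg K k i) • mul (mul (mul tb tc) ta) td
              + (sg K k i * sg K k j) • mul (mul (mul tc ta) tb) td
              + (sg K l k * (sg K k j * sg K l j)) • mul (mul (mul ta td) tc) tb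
              + (sg K l k * ((sg K k i * sg K l i) * (sg K k j * sg K l j))) •
                  mul (mul (mul td tc) ta) tb
              + (sg K k i * (sg K k j * sg K l j)) • mul (mul (mul tc ta) td) tb)) = 0 := by
          rw [htl]
          exact sub_eq_zero_of_eq h0
        rw [hMT, hX, TensorProduct.tmul_zero]
      have key := ext_tort (envMul mul) hS4 a (grassEnv_le_span grade ha)
        b (grassEnv_le_span grade hb) c (grassEnv_le_span grade hc)
        d (grassEnv_le_span grade hd)
      rw [Phi] at key
      have := eq_of_sub_eq_zero key
      simp only [envJ]
      exact this

end
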